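/- For every x ∈ (0, π/2): 1 − x ≤ ((1 + sin x)/(1 − sin x))^{−1/2} ≤ 1 − (2/π)·x. -/

import Mathlib

open Real

-- F(u) = 4u cos u - π sin u is nonneg on [0, π/4] (concave, zero at endpoints)
lemma lemF : ∀ u ∈ Set.Icc (0:ℝ) (π/4), π * Real.sin u ≤ 4 * u * Real.cos u := by
  have hπ := Real.pi_pos
  set F : ℝ → ℝ := fun u => 4 * u * Real.cos u - π * Real.sin u with hF
  have hconc : ConcaveOn ℝ (Set.Icc (0:ℝ) (π/4)) F := by
    apply concaveOn_of_hasDerivWithinAt2_nonpos (f' := fun u => (4 - π) * Real.cos u - 4 * u * Real.sin u)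
      (f'' := fun u => (π - 8) * Real.sin u - 4 * u * Real.cos u) (convex_Icc _ _)
    · fun_prop
    · intro u hu
      have h1 : HasDerivAt F ((4 - π) * Real.cos u - 4 * u * Real.sin u) u := by
        have hA : HasDerivAt (fun u : ℝ => 4 * u * Real.cos u)
            (4 * Real.cos u + 4 * u * (-Real.sin u)) u := by
          exact (((hasDerivAt_id u).const_mul (4:ℝ)).mul (Real.hasDerivAt_cos u)).congr_deriv (by simp only [id, mul_one])
        have hB : HasDerivAt (fun u : ℝ => π * Real.sin u) (π * Real.cos u) u :=
          (Real.hasDerivAt_sin u).const_mul π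
        have := hA.sub hB
        exact this.congr_deriv (by ring)
      exact h1.hasDerivWithinAt
    · intro u hu
      have hA : HasDerivAt (fun u : ℝ => (4 - π) * Real.cos u - 4 * u * Real.sin u)
          ((4 - π) * (-Real.sin u) - (4 * Real.sin u + 4 * u * Real.cos u)) u := by
        have h1 : HasDerivAt (fun u : ℝ => (4 - π) * Real.cos u) ((4 - π) * (-Real.sin u)) u :=
          (Real.hasDerivAt_cos u).const_mul _
        have h2 : HasDerivAt (fun u : ℝ => 4 * u * Real.sin u)
            (4 * Real.sin u + 4 * u * Real.cos u) u := by
          exact (((hasDerivAt_id u).const_mul (4:ℝ)).mul (Real.hasDerivAt_sin u)).congr_deriv (by simp only [id, mul_one])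
        exact h1.sub h2
      have : HasDerivAt (fun u : ℝ => (4 - π) * Real.cos u - 4 * u * Real.sin u)
          ((π - 8) * Real.sin u - 4 * u * Real.cos u) u := by
        exact hA.congr_deriv (by ring)
      exact this.hasDerivWithinAt
    · intro u hu
      rw [interior_Icc] at hu
      obtain ⟨hu0, hu1⟩ := hu
      have hs : 0 ≤ Real.sin u := Real.sin_nonneg_of_nonneg_of_le_pi hu0.le (by linarith)
      have hc : 0 ≤ Real.cos u := Real.cos_nonneg_of_mem_Icc ⟨by linarith, by linarith⟩
      have h8 : π ≤ 8 := by linarith [Real.pi_lt_d2]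
      nlinarith [mul_nonneg hs (show (0:ℝ) ≤ 8 - π by linarith),
        mul_nonneg (mul_nonneg (by norm_num : (0:ℝ) ≤ 4) hu0.le) hc]
  intro u hu
  obtain ⟨hu0, hu1⟩ := hu
  have hF0 : F 0 = 0 := by simp [hF]
  have hF1 : F (π/4) = 0 := by
    simp [hF, Real.cos_pi_div_four, Real.sin_pi_div_four]; ring
  have hb0 : 0 ≤ 4 * u / π := by positivity
  have hb1 : 4 * u / π ≤ 1 := by rw [div_le_one hπ]; linarith
  have key := hconc.2 (Set.left_mem_Icc.2 (by positivity)) (Set.right_mem_Icc.2 (by positivity))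
    (by linarith : (0:ℝ) ≤ 1 - 4 * u / π) hb0 (by ring)
  have heq : (1 - 4 * u / π) • (0:ℝ) + (4 * u / π) • (π/4) = u := by
    field_simp
    simp only [smul_zero, zero_add, smul_eq_mul]; field_simp; ring
  rw [heq, hF0, hF1] at key
  simp only [smul_zero, add_zero, smul_eq_mul, mul_zero] at key
  have : 0 ≤ F u := by linarith [key]
  simpa [hF, sub_nonneg] using this

-- D(x) = (1 - sin x) - (1-x) cos x ≥ 0 on [0, π/2]
lemma lemD : ∀ x ∈ Set.Icc (0:ℝ) (π/2), (1 - x) * Real.cos x ≤ 1 - Real.sin x := by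
  intro x ⟨hx0, hx1⟩
  rcases le_or_gt 1 x with h1 | h1
  · have hc : 0 ≤ Real.cos x := Real.cos_nonneg_of_mem_Icc ⟨by linarith, hx1⟩
    have hs : Real.sin x ≤ 1 := Real.sin_le_one x
    nlinarith
  · set D : ℝ → ℝ := fun x => 1 - Real.cos x - Real.sin x + x * Real.cos x with hD
    have hmono : MonotoneOn D (Set.Icc (0:ℝ) 1) := by
      apply monotoneOn_of_deriv_nonneg (convex_Icc _ _)
      · fun_prop
      · apply Differentiable.differentiableOn; fun_prop
      · intro y hy
        rw [interior_Icc] at hy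
        have hd : HasDerivAt D ((1 - y) * Real.sin y) y := by
          have h1 : HasDerivAt (fun x : ℝ => x * Real.cos x)
              (Real.cos y + y * (-Real.sin y)) y := by
            exact ((hasDerivAt_id y).mul (Real.hasDerivAt_cos y)).congr_deriv (by simp only [id, one_mul])
          have := (((hasDerivAt_const y (1:ℝ)).sub (Real.hasDerivAt_cos y)).sub
            (Real.hasDerivAt_sin y)).add h1
          exact this.congr_deriv (by ring)
        rw [hd.deriv]
        obtain ⟨hy1, hy2⟩ := hy
        have : 0 ≤ Real.sin y := Real.sin_nonneg_of_nonneg_of_le_pi hy1.le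
          (by linarith [Real.pi_gt_three])
        nlinarith
    have h0 : D 0 = 0 := by simp [hD]
    have := hmono (Set.left_mem_Icc.2 zero_le_one) ⟨hx0, h1.le⟩ hx0
    rw [h0] at this
    simp only [hD] at this
    linarith

theorem stmt_16 :
    ∀ x ∈ Set.Ioo (0 : ℝ) (π / 2),
      1 - x ≤ ((1 + Real.sin x) / (1 - Real.sin x)) ^ (-(1 : ℝ) / 2) ∧
      ((1 + Real.sin x) / (1 - Real.sin x)) ^ (-(1 : ℝ) / 2) ≤ 1 - (2 / π) * x := by
  intro x ⟨hx0, hx1⟩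
  have hπ := Real.pi_pos
  have hs0 : 0 < Real.sin x := Real.sin_pos_of_pos_of_lt_pi hx0 (by linarith)
  have hc0 : 0 < Real.cos x := Real.cos_pos_of_mem_Ioo ⟨by linarith, hx1⟩
  have hpyth := Real.sin_sq_add_cos_sq x
  have hs1 : Real.sin x < 1 := by nlinarith [mul_pos hc0 hc0]
  -- rewrite the rpow expression
  have hrw : ((1 + Real.sin x) / (1 - Real.sin x)) ^ (-(1 : ℝ) / 2)
      = (1 - Real.sin x) / Real.cos x := by
    rw [show (-(1:ℝ)/2) = -(1/2) by norm_num, Real.rpow_neg (div_nonneg (by linarith) (by linarith)),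
      ← Real.sqrt_eq_rpow, ← Real.sqrt_inv]
    rw [show ((1 + Real.sin x) / (1 - Real.sin x))⁻¹ = ((1 - Real.sin x)/Real.cos x)^2 by
      rw [inv_div]; field_simp; nlinarith]
    exact Real.sqrt_sq (div_nonneg (by linarith) hc0.le)
  rw [hrw]
  constructor
  · rw [le_div_iff₀ hc0]
    exact lemD x ⟨hx0.le, hx1.le⟩
  · rw [div_le_iff₀ hc0]
    -- use lemF with u = π/4 - x/2
    set u := π/4 - x/2 with hu
    have hu0 : 0 ≤ u := by rw [hu]; linarith
    have hu1 : u ≤ π/4 := by rw [hu]; linarith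
    have hF := lemF u ⟨hu0, hu1⟩
    have hsx : Real.sin x = Real.cos (2 * u) := by
      rw [show 2 * u = π/2 - x by rw [hu]; ring, Real.cos_pi_div_two_sub]
    have hcx : Real.cos x = Real.sin (2 * u) := by
      rw [show 2 * u = π/2 - x by rw [hu]; ring, Real.sin_pi_div_two_sub]
    have hsu : 0 ≤ Real.sin u := Real.sin_nonneg_of_nonneg_of_le_pi hu0 (hu1.trans (by linarith))
    have h2u : Real.cos (2 * u) = 1 - 2 * Real.sin u ^ 2 := by
      have := Real.sin_sq_add_cos_sq u
      rw [Real.cos_two_mul']; linarith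
    have hs2u : Real.sin (2 * u) = 2 * Real.sin u * Real.cos u := Real.sin_two_mul u
    have hcoef : 1 - 2/π * x = 4 * u / π := by
      rw [hu]; field_simp; ring
    rw [hsx, hcx, h2u, hs2u, hcoef]
    rw [div_mul_eq_mul_div, le_div_iff₀ hπ]
    nlinarith [mul_nonneg hsu (sub_nonneg.2 hF)]
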